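/- The RDD statistic has the same expectation as the DRND statistic, E[z_n] = E[y_n] = 1/n, and achieves variance reduction: Var(z_n) ≤ Var(y_n). -/

import Mathlib

open MeasureTheory ProbabilityTheory Finset Real
open scoped NNReal ENNReal

section RddAux

lemma rdd_integrable_pow_mul_exp {b : ℝ} (hb : 0 < b) (k : ℕ) :
    Integrable (fun x : ℝ => x ^ k * rexp (-b * x ^ 2)) := by
  have h := integrable_rpow_mul_exp_neg_mul_sq hb (s := (k : ℝ))
    (lt_of_lt_of_le neg_one_lt_zero (Nat.cast_nonneg k))
  simpa [Real.rpow_natCast] using h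

lemma rdd_integral_sq_mul_exp {b : ℝ} (hb : 0 < b) :
    ∫ x : ℝ, x ^ 2 * rexp (-b * x ^ 2) = √(π / b) / (2 * b) := by
  have hderiv : ∀ x : ℝ, HasDerivAt (fun y : ℝ => y * rexp (-b * y ^ 2))
      (rexp (-b * x ^ 2) - 2 * b * (x ^ 2 * rexp (-b * x ^ 2))) x := by
    intro x
    have h1 : HasDerivAt (fun y : ℝ => -b * y ^ 2) (-b * (2 * x)) x := by
      simpa using ((hasDerivAt_pow 2 x).const_mul (-b))
    have h : HasDerivAt (fun y : ℝ => y * rexp (-b * y ^ 2)) _ x := (hasDerivAt_id' x).mul h1.exp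
    convert h using 1
    ring
  have hint : Integrable fun x : ℝ =>
      rexp (-b * x ^ 2) - 2 * b * (x ^ 2 * rexp (-b * x ^ 2)) :=
    (integrable_exp_neg_mul_sq hb).sub ((rdd_integrable_pow_mul_exp hb 2).const_mul _)
  have hF : Integrable fun x : ℝ => x * rexp (-b * x ^ 2) := by
    simpa using rdd_integrable_pow_mul_exp hb 1
  have h0 := integral_eq_zero_of_hasDerivAt_of_integrable hderiv hint hF
  rw [integral_sub (integrable_exp_neg_mul_sq hb)
    ((rdd_integrable_pow_mul_exp hb 2).const_mul _), integral_const_mul _ _,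
    integral_gaussian] at h0
  have hb' : (2 : ℝ) * b ≠ 0 := by positivity
  field_simp at h0 ⊢
  linarith

variable {v : ℝ≥0}

lemma rdd_integral_gaussianReal_eq (m : ℝ) (hv : v ≠ 0) (g : ℝ → ℝ) :
    ∫ x, g x ∂(gaussianReal m v) = ∫ x, gaussianPDFReal m v x * g x := by
  rw [gaussianReal_of_var_ne_zero m hv, gaussianPDF_def]
  have h : (fun x => ENNReal.ofReal (gaussianPDFReal m v x))
      = fun x => ((fun y => (gaussianPDFReal m v y).toNNReal) x : ℝ≥0∞) := rfl
  rw [h, integral_withDensity_eq_integral_smul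
    ((measurable_gaussianPDFReal m v).real_toNNReal) g]
  congr 1
  ext x
  rw [NNReal.smul_def, smul_eq_mul, Real.coe_toNNReal _ (gaussianPDFReal_nonneg m v x)]

lemma rdd_pdf_zero_mul (hv : v ≠ 0) (k : ℕ) (x : ℝ) :
    (gaussianPDFReal 0 v x) * x ^ k
      = (√(2 * π * v))⁻¹ * (x ^ k * rexp (-(2 * (v:ℝ))⁻¹ * x ^ 2)) := by
  have hv2 : (v:ℝ) ≠ 0 := by exact_mod_cast hv
  rw [gaussianPDFReal, sub_zero,
    show -x ^ 2 / (2 * (v:ℝ)) = -(2 * (v:ℝ))⁻¹ * x ^ 2 by field_simp]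
  ring

lemma rdd_integrable_pow_gaussianReal (hv : v ≠ 0) (k : ℕ) :
    Integrable (fun x : ℝ => x ^ k) (gaussianReal 0 v) := by
  have hv' : (0:ℝ) < (v:ℝ) := lt_of_le_of_ne (v.coe_nonneg) (by exact_mod_cast (Ne.symm hv))
  have hb : (0:ℝ) < (2 * (v:ℝ))⁻¹ := by positivity
  rw [gaussianReal_of_var_ne_zero 0 hv, gaussianPDF_def]
  have h : (fun x => ENNReal.ofReal (gaussianPDFReal 0 v x))
      = fun x => ((fun y => (gaussianPDFReal 0 v y).toNNReal) x : ℝ≥0∞) := rfl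
  rw [h, integrable_withDensity_iff_integrable_smul
    ((measurable_gaussianPDFReal 0 v).real_toNNReal)]
  refine (((rdd_integrable_pow_mul_exp hb k).const_mul ((√(2 * π * v))⁻¹)).congr
    (Filter.Eventually.of_forall fun x => ?_))
  simp only [NNReal.smul_def, smul_eq_mul]
  rw [Real.coe_toNNReal _ (gaussianPDFReal_nonneg 0 v x)]
  exact (rdd_pdf_zero_mul hv k x).symm

lemma rdd_gaussianReal_map_neg (hv : v ≠ 0) :
    Measure.map (fun x : ℝ => -x) (gaussianReal 0 v) = gaussianReal 0 v := by
  have h := gaussianReal_map_const_mul (μ := 0) (v := v) (-1)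
  have h1 : ((-1 : ℝ) * ·) = fun x : ℝ => -x := by ext x; ring
  have h2 : (⟨(-1:ℝ)^2, sq_nonneg _⟩ : ℝ≥0) = 1 := by ext; norm_num
  rw [h1] at h
  convert h using 2
  · ring
  · ext; simp

lemma rdd_integral_odd_gaussianReal (hv : v ≠ 0) {k : ℕ} (hk : Odd k) :
    ∫ x, x ^ k ∂(gaussianReal 0 v) = 0 := by
  have h : ∫ x, x ^ k ∂(gaussianReal 0 v)
      = ∫ x, (-x) ^ k ∂(gaussianReal 0 v) := by
    conv_lhs => rw [← rdd_gaussianReal_map_neg hv]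
    have hm : Measurable fun y : ℝ => y ^ k := by fun_prop
    rw [integral_map measurable_neg.aemeasurable hm.aestronglyMeasurable]
  have h2 : ∫ x, (-x) ^ k ∂(gaussianReal 0 v)
      = - ∫ x, x ^ k ∂(gaussianReal 0 v) := by
    rw [← integral_neg]
    congr 1
    ext x
    exact hk.neg_pow x
  linarith [h, h2]

lemma rdd_integral_sq_gaussianReal (hv : v ≠ 0) :
    ∫ x, x ^ 2 ∂(gaussianReal 0 v) = v := by
  have hv' : (0:ℝ) < (v:ℝ) := lt_of_le_of_ne (v.coe_nonneg) (by exact_mod_cast (Ne.symm hv))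
  have hb : (0:ℝ) < (2 * (v:ℝ))⁻¹ := by positivity
  rw [rdd_integral_gaussianReal_eq 0 hv]
  calc ∫ x, gaussianPDFReal 0 v x * x ^ 2
      = ∫ x, (√(2 * π * v))⁻¹ * (x ^ 2 * rexp (-(2 * (v:ℝ))⁻¹ * x ^ 2)) := by
        congr 1; ext x; exact rdd_pdf_zero_mul hv 2 x
    _ = (√(2 * π * v))⁻¹ * (√(π / (2 * (v:ℝ))⁻¹) / (2 * (2 * (v:ℝ))⁻¹)) := by
        rw [integral_const_mul _ _, rdd_integral_sq_mul_exp hb]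
    _ = (v : ℝ) := by
        have h1 : π / (2 * (v:ℝ))⁻¹ = 2 * π * v := by field_simp
        rw [h1]
        have h2 : (0:ℝ) < 2 * π * v := by positivity
        have h3 : √(2 * π * v) ≠ 0 := ne_of_gt (Real.sqrt_pos.mpr h2)
        field_simp

lemma rdd_integrable_pow_le_four {Ω : Type*} [MeasurableSpace Ω] {P : Measure Ω}
    [IsProbabilityMeasure P] {W : Ω → ℝ} (hW : MemLp W 4 P) (k : ℕ) (hk : 0 < k)
    (hk4 : k ≤ 4) : Integrable (fun ω => W ω ^ k) P := by
  have hk0 : (k : ℝ≥0∞) ≠ 0 := by exact_mod_cast hk.ne'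
  have hktop : (k : ℝ≥0∞) ≠ ⊤ := ENNReal.natCast_ne_top k
  have hWk : MemLp W (k : ℝ≥0∞) P := hW.mono_exponent (by exact_mod_cast hk4)
  have h := (memLp_norm_rpow_iff (q := (k:ℝ≥0∞)) (p := (k:ℝ≥0∞))
    hWk.aestronglyMeasurable hk0 hktop).mpr hWk
  rw [ENNReal.div_self hk0 hktop, memLp_one_iff_integrable] at h
  have he : (fun x => ‖W x‖ ^ ((k:ℝ≥0∞)).toReal) = fun x => ‖W x ^ k‖ := by
    ext x
    rw [ENNReal.toReal_natCast, Real.rpow_natCast, Real.norm_eq_abs, Real.norm_eq_abs, pow_abs]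
  rw [he] at h
  exact (integrable_norm_iff
    ((hW.aestronglyMeasurable.aemeasurable.pow_const k).aestronglyMeasurable)).mp h

lemma rdd_memℒp_sq_of_four {Ω : Type*} [MeasurableSpace Ω] {P : Measure Ω}
    [IsProbabilityMeasure P] {W : Ω → ℝ} (hW : MemLp W 4 P) :
    MemLp (fun ω => W ω ^ 2) 2 P := by
  have h := (memLp_norm_rpow_iff (q := (2:ℝ≥0∞)) (p := (4:ℝ≥0∞))
    hW.aestronglyMeasurable (by norm_num) (by norm_num)).mpr hW
  have h42 : (4:ℝ≥0∞)/2 = 2 := by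
    rw [eq_comm, ENNReal.eq_div_iff (by norm_num) (by norm_num)]; norm_num
  rw [h42] at h
  have he : (fun x => ‖W x‖ ^ ((2:ℝ≥0∞)).toReal) = fun x => W x ^ 2 := by
    ext x
    rw [show ((2:ℝ≥0∞)).toReal = ((2:ℕ):ℝ) by norm_num, Real.rpow_natCast,
      Real.norm_eq_abs]
    exact (Even.pow_abs (by norm_num) _)
  rwa [he] at h

lemma rdd_memℒp_four_gaussian {Ω : Type*} [MeasurableSpace Ω] {P : Measure Ω}
    [IsProbabilityMeasure P] {W : Ω → ℝ} (hW : Measurable W)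
    (hd : Measure.map W P = gaussianReal 0 v) (hv : v ≠ 0) : MemLp W 4 P := by
  have hid : MemLp (id : ℝ → ℝ) 4 (gaussianReal 0 v) := by
    have hInt : Integrable (fun x : ℝ => x ^ 4) (gaussianReal 0 v) :=
      rdd_integrable_pow_gaussianReal hv 4
    have h44 : (4:ℝ≥0∞)/4 = 1 := ENNReal.div_self (by norm_num) (by norm_num)
    refine (memLp_norm_rpow_iff (q := (4:ℝ≥0∞)) (p := (4:ℝ≥0∞))
      aestronglyMeasurable_id (by norm_num) (by norm_num)).mp ?_
    rw [h44, memLp_one_iff_integrable]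
    refine hInt.congr (Filter.Eventually.of_forall fun x => ?_)
    show x ^ 4 = ‖id x‖ ^ ((4:ℝ≥0∞)).toReal
    rw [show ((4:ℝ≥0∞)).toReal = ((4:ℕ):ℝ) by norm_num, id_eq, Real.rpow_natCast,
      Real.norm_eq_abs, Even.pow_abs ⟨2, rfl⟩]
  have h := (memLp_map_measure_iff (p := 4) (g := (id : ℝ → ℝ)) (f := W)
    aestronglyMeasurable_id hW.aemeasurable).mp (by rw [hd]; exact hid)
  exact h

lemma rdd_aux_map_sub {Ω : Type*} [MeasurableSpace Ω] {P : Measure Ω} {g : Ω → ℝ} {m : ℝ}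
    (hg : Measurable g) (hgd : Measure.map g P = gaussianReal m v) :
    Measure.map (fun ω => g ω - m) P = gaussianReal 0 v := by
  have h1 : (fun ω => g ω - m) = (fun x => x + (-m)) ∘ g := by
    ext ω; simp [sub_eq_add_neg]
  rw [h1, ← Measure.map_map (by fun_prop : Measurable fun x : ℝ => x + (-m)) hg, hgd]
  have := gaussianReal_map_add_const (μ := m) (v := v) (-m)
  simpa using this

end RddAux

/-- The RDD statistic has the same expectation as the DRND statistic,
`E[z_n] = E[y_n] = 1/n`, and achieves variance reduction:
`Var(z_n) ≤ Var(y_n)`, where `z_n = (f̄ − μ)²/σ²`, `y_n = (f̄² − μ²)/σ²`,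
and `f̄` is the sample mean of `n` i.i.d. Gaussian `N(μ, σ²)` variables. -/
theorem rdd_vs_drnd
    {Ω : Type*} [MeasurableSpace Ω] (P : Measure Ω) [IsProbabilityMeasure P]
    (n : ℕ) (hn : 0 < n) (μ σ : ℝ) (hσ : 0 < σ)
    (f : Fin n → Ω → ℝ) (hmeas : ∀ i, Measurable (f i))
    (hindep : iIndepFun f P)
    (hdist : ∀ i, Measure.map (f i) P = gaussianReal μ ⟨σ ^ 2, sq_nonneg σ⟩) :
    (∫ ω, ((∑ i, f i ω) / n - μ) ^ 2 / σ ^ 2 ∂P = 1 / n) ∧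
    (∫ ω, (((∑ i, f i ω) / n) ^ 2 - μ ^ 2) / σ ^ 2 ∂P = 1 / n) ∧
    variance (fun ω => ((∑ i, f i ω) / n - μ) ^ 2 / σ ^ 2) P ≤
      variance (fun ω => (((∑ i, f i ω) / n) ^ 2 - μ ^ 2) / σ ^ 2) P := by
  have hσ2 : (0:ℝ) < σ ^ 2 := by positivity
  have hnR : (0:ℝ) < n := by exact_mod_cast hn
  set v : ℝ≥0 := ⟨σ ^ 2, sq_nonneg σ⟩ with hvdef
  have hvr : (v : ℝ) = σ ^ 2 := rfl
  have hv : v ≠ 0 := by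
    intro h
    have h2 : (v : ℝ) = 0 := by rw [h]; exact NNReal.coe_zero
    rw [hvr] at h2
    exact hσ2.ne' h2
  set Y : Fin n → Ω → ℝ := fun i ω => f i ω - μ with hYdef
  have hYmeas : ∀ i, Measurable (Y i) := fun i => (hmeas i).sub measurable_const
  have hYdist : ∀ i, Measure.map (Y i) P = gaussianReal 0 v :=
    fun i => rdd_aux_map_sub (hmeas i) (hdist i)
  have hmom : ∀ (i) (k : ℕ), ∫ ω, Y i ω ^ k ∂P = ∫ x, x ^ k ∂(gaussianReal 0 v) := by
    intro i k
    have hm : Measurable fun y : ℝ => y ^ k := by fun_prop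
    rw [← hYdist i, integral_map (hYmeas i).aemeasurable hm.aestronglyMeasurable]
  have hY1 : ∀ i, ∫ ω, Y i ω ∂P = 0 := by
    intro i
    have h := hmom i 1
    simp only [pow_one] at h
    rw [h]
    simpa using rdd_integral_odd_gaussianReal hv (k := 1) (by norm_num)
  have hY2 : ∀ i, ∫ ω, Y i ω ^ 2 ∂P = σ ^ 2 := by
    intro i; rw [hmom i 2, rdd_integral_sq_gaussianReal hv, hvr]
  have hY3 : ∀ i, ∫ ω, Y i ω ^ 3 ∂P = 0 := by
    intro i; rw [hmom i 3, rdd_integral_odd_gaussianReal hv (Nat.odd_iff.mpr rfl)]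
  have hY4mem : ∀ i, MemLp (Y i) 4 P :=
    fun i => rdd_memℒp_four_gaussian (hYmeas i) (hYdist i) hv
  have hY2mem : ∀ i, MemLp (Y i) 2 P := fun i =>
    (hY4mem i).mono_exponent (by norm_num)
  have hYint : ∀ i, Integrable (Y i) P := fun i =>
    memLp_one_iff_integrable.mp ((hY4mem i).mono_exponent (by norm_num))
  have hYint2 : ∀ i, Integrable (fun ω => Y i ω ^ 2) P := fun i =>
    rdd_integrable_pow_le_four (hY4mem i) 2 (by norm_num) (by norm_num)
  have hYint3 : ∀ i, Integrable (fun ω => Y i ω ^ 3) P := fun i =>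
    rdd_integrable_pow_le_four (hY4mem i) 3 (by norm_num) (by norm_num)
  have hindepY : iIndepFun Y P :=
    hindep.comp (fun _ => fun x : ℝ => x - μ) (fun _ => measurable_id.sub_const μ)
  -- the centered sum
  set S : Ω → ℝ := fun ω => ∑ i, Y i ω with hSdef
  have hSfun : (∑ i, Y i) = S := by ext ω; simp [hSdef]
  have hS4mem : MemLp S 4 P := by
    rw [← hSfun]; exact memLp_finset_sum' _ (fun i _ => hY4mem i)
  have hS2mem : MemLp S 2 P := hS4mem.mono_exponent (by norm_num)
  have hiS : ∀ k, 0 < k → k ≤ 4 → Integrable (fun ω => S ω ^ k) P :=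
    fun k h1 h2 => rdd_integrable_pow_le_four hS4mem k h1 h2
  have hiS1 : Integrable S P :=
    memLp_one_iff_integrable.mp (hS4mem.mono_exponent (by norm_num))
  have hSsum0 : ∀ s : Finset (Fin n), ∫ ω, (∑ i ∈ s, Y i ω) ∂P = 0 := by
    intro s
    rw [integral_finset_sum s (fun i _ => hYint i)]
    simp [hY1]
  have hS1 : ∫ ω, S ω ∂P = 0 := hSsum0 univ
  -- variance of S
  have hVarY : ∀ i, variance (Y i) P = σ ^ 2 := by
    intro i
    rw [variance_eq_sub (hY2mem i)]
    simp only [Pi.pow_apply]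
    rw [hY1 i, hY2 i]
    ring
  have hVarS : variance S P = n * σ ^ 2 := by
    rw [← hSfun, IndepFun.variance_sum (fun i _ => hY2mem i)
      (fun i _ j _ hij => hindepY.indepFun hij)]
    simp [hVarY, card_univ]
  have hS2 : ∫ ω, S ω ^ 2 ∂P = n * σ ^ 2 := by
    have h := variance_eq_sub hS2mem
    rw [hVarS] at h
    simp only [Pi.pow_apply] at h
    rw [hS1] at h
    simpa using h.symm
  -- third moment of S is zero
  have hS3' : ∀ s : Finset (Fin n), ∫ ω, (∑ i ∈ s, Y i ω) ^ 3 ∂P = 0 := by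
    intro s
    induction s using Finset.cons_induction with
    | empty => simp
    | cons j s hj IH =>
      have hTeq : (∑ i ∈ s, Y i) = fun ω => ∑ i ∈ s, Y i ω := by
        ext ω; simp
      have hT4 : MemLp (fun ω => ∑ i ∈ s, Y i ω) 4 P := by
        rw [← hTeq]; exact memLp_finset_sum' _ (fun i _ => hY4mem i)
      have hTY : IndepFun (fun ω => ∑ i ∈ s, Y i ω) (Y j) P := by
        have h := hindepY.indepFun_finset_sum_of_notMem hYmeas hj
        rwa [hTeq] at h
      have hTmeas : Measurable (fun ω => ∑ i ∈ s, Y i ω) :=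
        Finset.measurable_sum s (fun i _ => hYmeas i)
      have hiT : ∀ k, 0 < k → k ≤ 4 → Integrable (fun ω => (∑ i ∈ s, Y i ω) ^ k) P :=
        fun k h1 h2 => rdd_integrable_pow_le_four hT4 k h1 h2
      have hiT1 : Integrable (fun ω => ∑ i ∈ s, Y i ω) P := by
        have := hiT 1 (by norm_num) (by norm_num); simpa using this
      have hITY2 : IndepFun (fun ω => (∑ i ∈ s, Y i ω) ^ 2) (Y j) P :=
        hTY.comp (measurable_id.pow_const 2) measurable_id
      have hITY2' : IndepFun (fun ω => ∑ i ∈ s, Y i ω) (fun ω => Y j ω ^ 2) P :=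
        hTY.comp measurable_id (measurable_id.pow_const 2)
      have iT2Yj : Integrable (fun ω => (∑ i ∈ s, Y i ω) ^ 2 * Y j ω) P :=
        hITY2.integrable_mul (hiT 2 (by norm_num) (by norm_num)) (hYint j)
      have iTYj2 : Integrable (fun ω => (∑ i ∈ s, Y i ω) * Y j ω ^ 2) P :=
        hITY2'.integrable_mul hiT1 (hYint2 j)
      have e1 : ∫ ω, (∑ i ∈ s, Y i ω) ^ 2 * Y j ω ∂P
          = (∫ ω, (∑ i ∈ s, Y i ω) ^ 2 ∂P) * ∫ ω, Y j ω ∂P :=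
        hITY2.integral_fun_mul_eq_mul_integral ((hTmeas.pow_const 2).aestronglyMeasurable)
          (hYmeas j).aestronglyMeasurable
      have e2 : ∫ ω, (∑ i ∈ s, Y i ω) * Y j ω ^ 2 ∂P
          = (∫ ω, (∑ i ∈ s, Y i ω) ∂P) * ∫ ω, Y j ω ^ 2 ∂P :=
        hITY2'.integral_fun_mul_eq_mul_integral hTmeas.aestronglyMeasurable
          ((hYmeas j).pow_const 2).aestronglyMeasurable
      calc ∫ ω, (∑ i ∈ cons j s hj, Y i ω) ^ 3 ∂P
          = ∫ ω, ((∑ i ∈ s, Y i ω) ^ 3 + (3 * ((∑ i ∈ s, Y i ω) ^ 2 * Y j ω)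
              + (3 * ((∑ i ∈ s, Y i ω) * Y j ω ^ 2) + Y j ω ^ 3))) ∂P := by
            congr 1; ext ω; rw [Finset.sum_cons]; ring
        _ = 0 := by
            have iA : Integrable (fun ω => 3 * ((∑ i ∈ s, Y i ω) * Y j ω ^ 2)
                + Y j ω ^ 3) P := (iTYj2.const_mul 3).add (hYint3 j)
            have iB : Integrable (fun ω => 3 * ((∑ i ∈ s, Y i ω) ^ 2 * Y j ω)
                + (3 * ((∑ i ∈ s, Y i ω) * Y j ω ^ 2) + Y j ω ^ 3)) P :=
              (iT2Yj.const_mul 3).add iA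
            rw [integral_add (hiT 3 (by norm_num) (by norm_num)) iB,
              integral_add (iT2Yj.const_mul 3) iA,
              integral_add (iTYj2.const_mul 3) (hYint3 j),
              integral_const_mul _ _, integral_const_mul _ _, e1, e2, IH, hY1 j, hY3 j,
              hSsum0 s]
            ring
  have hS3 : ∫ ω, S ω ^ 3 ∂P = 0 := hS3' univ
  have hn' : (n:ℝ) ≠ 0 := hnR.ne'
  have hσ' : σ ≠ 0 := hσ.ne'
  have hXeq : ∀ ω : Ω, (∑ i, f i ω) / n - μ = S ω / n := by
    intro ω
    have hsum : S ω = (∑ i, f i ω) - n * μ := by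
      simp only [hSdef, hYdef, Finset.sum_sub_distrib, Finset.sum_const, card_univ,
        Fintype.card_fin, nsmul_eq_mul]
    rw [hsum]
    field_simp
  have e1 : (fun ω => ((∑ i, f i ω) / n - μ) ^ 2 / σ ^ 2)
      = fun ω => ((n:ℝ) ^ 2 * σ ^ 2)⁻¹ * S ω ^ 2 := by
    ext ω
    rw [hXeq ω]
    field_simp
  have e2 : (fun ω => (((∑ i, f i ω) / n) ^ 2 - μ ^ 2) / σ ^ 2)
      = fun ω => ((n:ℝ) ^ 2 * σ ^ 2)⁻¹ * S ω ^ 2 + (2 * μ / (n * σ ^ 2)) * S ω := by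
    ext ω
    have h : (∑ i, f i ω) / (n:ℝ) = S ω / n + μ := by
      rw [← hXeq ω]; ring
    rw [h]
    field_simp
    ring
  have hiS4 := hiS 4 (by norm_num) (by norm_num)
  have hiS3 := hiS 3 (by norm_num) (by norm_num)
  have hiS2' := hiS 2 (by norm_num) (by norm_num)
  refine ⟨?_, ?_, ?_⟩
  · rw [e1, integral_const_mul _ _, hS2]
    field_simp
  · rw [e2, integral_add (hiS2'.const_mul _) (hiS1.const_mul _),
      integral_const_mul _ _, integral_const_mul _ _, hS1, hS2]
    field_simp
    ring
  · rw [e1, e2]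
    set a : ℝ := ((n:ℝ) ^ 2 * σ ^ 2)⁻¹ with ha
    set d : ℝ := 2 * μ / (n * σ ^ 2) with hd
    have hzmem : MemLp (fun ω => a * S ω ^ 2) 2 P :=
      (rdd_memℒp_sq_of_four hS4mem).const_mul a
    have hymem : MemLp (fun ω => a * S ω ^ 2 + d * S ω) 2 P :=
      hzmem.add (hS2mem.const_mul d)
    rw [variance_eq_sub hzmem, variance_eq_sub hymem]
    simp only [Pi.pow_apply]
    have hz1 : ∫ ω, a * S ω ^ 2 ∂P = a * (n * σ ^ 2) := by
      rw [integral_const_mul _ _, hS2]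
    have hz2 : ∫ ω, (a * S ω ^ 2) ^ 2 ∂P = a ^ 2 * ∫ ω, S ω ^ 4 ∂P := by
      have h : (fun ω => (a * S ω ^ 2) ^ 2) = fun ω => a ^ 2 * S ω ^ 4 := by
        ext ω; ring
      rw [h, integral_const_mul _ _]
    have hy1 : ∫ ω, (a * S ω ^ 2 + d * S ω) ∂P = a * (n * σ ^ 2) := by
      rw [integral_add (hiS2'.const_mul a) (hiS1.const_mul d), integral_const_mul _ _,
        integral_const_mul _ _, hS1, hS2]
      ring
    have hy2 : ∫ ω, (a * S ω ^ 2 + d * S ω) ^ 2 ∂P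
        = a ^ 2 * (∫ ω, S ω ^ 4 ∂P) + d ^ 2 * (n * σ ^ 2) := by
      have hexp : (fun ω => (a * S ω ^ 2 + d * S ω) ^ 2)
          = fun ω => a ^ 2 * S ω ^ 4 + (2 * (a * d) * S ω ^ 3 + d ^ 2 * S ω ^ 2) := by
        ext ω; ring
      have iA : Integrable (fun ω => 2 * (a * d) * S ω ^ 3 + d ^ 2 * S ω ^ 2) P :=
        (hiS3.const_mul _).add (hiS2'.const_mul _)
      rw [hexp, integral_add (hiS4.const_mul _) iA,
        integral_add (hiS3.const_mul _) (hiS2'.const_mul _),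
        integral_const_mul _ _, integral_const_mul _ _, integral_const_mul _ _, hS3, hS2]
      ring
    rw [hz1, hz2, hy1, hy2]
    have hpos : 0 ≤ d ^ 2 * ((n:ℝ) * σ ^ 2) := by positivity
    linarith
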